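/- Let (−,−)_g be the trace form on Γ^ℚ(T) associated to the adjoint representation, and let K be the kernel of the averaging operator Γ^ℚ(T) → Γ^ℚ(T)^{W_G°}. Then the restriction of (−,−)_g to K is positive definite, and Γ^ℚ(T) = Γ^ℚ(T)^{W_G°} ⊕ K is an orthogonal direct sum for (−,−)_g. -/

import Mathlib

/-!
STATEMENT 13: Let `(−,−)_g` be the trace form on `Γ^ℚ(T)` associated to the adjoint
representation, and `K` the kernel of the averaging operator
`Γ^ℚ(T) → Γ^ℚ(T)^{W_G°}`.  Then the restriction of `(−,−)_g` to `K` is positive definite,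
and `Γ^ℚ(T) = Γ^ℚ(T)^{W_G°} ⊕ K` is an orthogonal direct sum for `(−,−)_g`.

Formalization: `V = Γ^ℚ(T)` is a finite-dimensional `ℚ`-vector space with a representation
`ρ` of the finite Weyl group `W = W_{G°}`; `B` is the trace form, recorded through its
characterizing properties: symmetric, positive semidefinite, `W`-invariant, and its kernel
is exactly the `W`-invariants (Statement 12).  The averaging operator is
`avg = (1/|W|) Σ_{w∈W} ρ w`, and `K = ker avg`.  Conclusions: `B` is positive definite on
`K`; `W`-invariant vectors are `B`-orthogonal to `K`; and every `v ∈ V` decomposes uniquely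
as a sum of a `W`-invariant vector and an element of `K`.
-/

theorem stmt_13 {W V : Type*} [Group W] [Fintype W] [AddCommGroup V] [Module ℚ V]
    [FiniteDimensional ℚ V] (ρ : Representation ℚ W V)
    (B : LinearMap.BilinForm ℚ V)
    (hsymm : ∀ x y, B x y = B y x)
    (hpsd : ∀ x : V, 0 ≤ B x x)
    (hinv : ∀ (w : W) (x y : V), B (ρ w x) (ρ w y) = B x y)
    (hker : ∀ x : V, (∀ y : V, B x y = 0) ↔ ∀ w : W, ρ w x = x) :
    (∀ x ∈ LinearMap.ker ((Fintype.card W : ℚ)⁻¹ • ∑ w : W, ρ w), x ≠ 0 → 0 < B x x) ∧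
    (∀ x y : V, (∀ w : W, ρ w x = x) →
      y ∈ LinearMap.ker ((Fintype.card W : ℚ)⁻¹ • ∑ w : W, ρ w) → B x y = 0) ∧
    (∀ v : V, ∃! p : V × V, (∀ w : W, ρ w p.1 = p.1) ∧
      p.2 ∈ LinearMap.ker ((Fintype.card W : ℚ)⁻¹ • ∑ w : W, ρ w) ∧ v = p.1 + p.2) := by

  classical
  set a : V →ₗ[ℚ] V := (Fintype.card W : ℚ)⁻¹ • ∑ w : W, ρ w with ha
  have hcard : (Fintype.card W : ℚ) ≠ 0 := by
    exact_mod_cast Fintype.card_ne_zero (α := W)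
  -- averaging fixes invariant vectors
  have hfix : ∀ x : V, (∀ w : W, ρ w x = x) → a x = x := by
    intro x hx
    simp only [ha, LinearMap.smul_apply, LinearMap.sum_apply, hx,
      Finset.sum_const, Finset.card_univ]
    rw [← Nat.cast_smul_eq_nsmul ℚ, smul_smul, inv_mul_cancel₀ hcard, one_smul]
  -- the image of the averaging operator is invariant
  have hainv : ∀ (v : V) (w : W), ρ w (a v) = a v := by
    intro v w
    simp only [ha, LinearMap.smul_apply, LinearMap.sum_apply, map_smul]
    congr 1
    rw [map_sum]
    refine Fintype.sum_equiv (Equiv.mulLeft w) _ _ ?_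
    intro u
    simp [Equiv.coe_mulLeft, map_mul, Module.End.mul_apply]
  -- invariant vectors are orthogonal to ker a
  have horth : ∀ x y : V, (∀ w : W, ρ w x = x) → a y = 0 → B x y = 0 := by
    intro x y hx hy
    have h1 : ∀ w : W, B x (ρ w y) = B x y := by
      intro w
      conv_rhs => rw [← hinv w x y, hx w]
    have h2 : B x (a y) = B x y := by
      simp only [ha, LinearMap.smul_apply, LinearMap.sum_apply, map_smul, map_sum,
        h1, Finset.sum_const, Finset.card_univ, smul_eq_mul, nsmul_eq_mul]
      field_simp
    rw [hy] at h2
    simpa using h2.symm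
  -- positive definiteness on ker a
  have hpos : ∀ x : V, a x = 0 → x ≠ 0 → 0 < B x x := by
    intro x hx hxne
    rcases lt_or_eq_of_le (hpsd x) with h | h
    · exact h
    exfalso
    have hBx : ∀ y : V, B x y = 0 := by
      intro y
      by_contra hc
      set c : ℚ := B x y with hcdef
      set d : ℚ := B y y with hddef
      have hd : 0 ≤ d := hpsd y
      have hd1 : (0:ℚ) < d + 1 := by linarith
      set t : ℚ := c / (d + 1) with htdef
      have hkey := hpsd (x - t • y)
      have hyx : B y x = c := hsymm y x
      simp only [map_sub, map_smul, LinearMap.sub_apply, LinearMap.smul_apply,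
        smul_eq_mul] at hkey
      rw [← h, hyx, ← hcdef, ← hddef, htdef] at hkey
      have hc2 : 0 < c^2 := by positivity
      have hne : d + 1 ≠ 0 := ne_of_gt hd1
      field_simp at hkey
      nlinarith [hc2, hd1, mul_pos hd1 hd1]
    have hxinv : ∀ w : W, ρ w x = x := (hker x).mp hBx
    have := hfix x hxinv
    rw [hx] at this
    exact hxne this.symm
  refine ⟨?_, ?_, ?_⟩
  · intro x hx hxne
    exact hpos x (LinearMap.mem_ker.mp hx) hxne
  · intro x y hx hy
    exact horth x y hx (LinearMap.mem_ker.mp hy)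
  · intro v
    refine ⟨(a v, v - a v), ⟨hainv v, ?_, by simp⟩, ?_⟩
    · rw [LinearMap.mem_ker, map_sub, hfix (a v) (hainv v), sub_self]
    · rintro ⟨p1, p2⟩ ⟨hp1, hp2, hp3⟩
      rw [LinearMap.mem_ker] at hp2
      have h1 : a v = p1 := by
        rw [hp3, map_add, hfix p1 hp1, hp2, add_zero]
      have h2 : v - a v = p2 := by rw [h1, hp3]; abel
      simp [Prod.ext_iff, h1.symm, h2.symm]
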